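/- For any n ≥ 1, consecutive sequences in the list of all restricted growth functions R_n ordered by the Reflected Gray Code Order ≺ differ in at most 3 adjacent positions. -/

import Mathlib

/-- `s` (0-indexed) is a restricted growth function of length `n`:
`s 0 = 0` and each next entry is at most the max of previous entries plus 1. -/
def IsRGF (n : ℕ) (s : ℕ → ℕ) : Prop :=
  s 0 = 0 ∧ ∀ i, i + 1 < n → s (i + 1) ≤ (Finset.range (i + 1)).sup s + 1

/-- membership in `R_n(b)`: restricted growth function bounded by `b`. -/
def InRnb (n b : ℕ) (s : ℕ → ℕ) : Prop :=
  IsRGF n s ∧ ∀ i < n, s i ≤ b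

/-- membership in `R*_n(b)`: restricted growth function with maximum exactly `b`. -/
def InRnbStar (n b : ℕ) (s : ℕ → ℕ) : Prop :=
  IsRGF n s ∧ (∀ i < n, s i ≤ b) ∧ ∃ i < n, s i = b

/-- Reflected Gray Code Order on length-`n` sequences. -/
def rgcLt (n : ℕ) (s t : ℕ → ℕ) : Prop :=
  ∃ k < n, (∀ i < k, s i = t i) ∧
    ((Even (∑ i ∈ Finset.range k, s i) ∧ s k < t k) ∨
     (Odd (∑ i ∈ Finset.range k, s i) ∧ t k < s k))

/-- `U_k`: number of indices `i < k` with `s i` nonzero and even. -/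
def Uval (s : ℕ → ℕ) (k : ℕ) : ℕ :=
  ((Finset.range k).filter (fun i => s i ≠ 0 ∧ Even (s i))).card

/-- co-Reflected Gray Code Order on length-`n` sequences. -/
def coRgcLt (n : ℕ) (s t : ℕ → ℕ) : Prop :=
  ∃ k < n, (∀ i < k, s i = t i) ∧
    ((Even (Uval s k) ∧ s k < t k) ∨ (Odd (Uval s k) ∧ t k < s k))

namespace Stmt9Aux



noncomputable def gval (p : Bool) (s : ℕ → ℕ) (k i : ℕ) : ℕ :=
  if Even (∑ j ∈ Finset.range (k+1), s j) ↔ p = true then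
    if i = k+1 then (Finset.range (k+1)).sup s + 1
    else if i = k+2 ∧ Even ((Finset.range (k+1)).sup s + 1) then (Finset.range (k+1)).sup s + 2
    else 0
  else 0

noncomputable def gext (p : Bool) (s : ℕ → ℕ) (k : ℕ) : ℕ → ℕ :=
  fun i => if i ≤ k then s i else gval p s k i

lemma gext_le {p s k i} (h : i ≤ k) : gext p s k i = s i := if_pos h

lemma gext_gt {p s k i} (h : k < i) : gext p s k i = gval p s k i := if_neg (by omega)

lemma gext_zero {p s k i} (h : k + 3 ≤ i) : gext p s k i = 0 := by
  rw [gext_gt (by omega)]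
  unfold gval
  split_ifs with h1 h2 h3
  · omega
  · exact absurd h3.1 (by omega)
  · rfl
  · rfl

lemma sup_agree {a b : ℕ → ℕ} {m : ℕ} (h : ∀ i < m, a i = b i) :
    (Finset.range m).sup a = (Finset.range m).sup b :=
  Finset.sup_congr rfl (fun i hi => h i (Finset.mem_range.mp hi))

lemma sum_agree {a b : ℕ → ℕ} {m : ℕ} (h : ∀ i < m, a i = b i) :
    ∑ i ∈ Finset.range m, a i = ∑ i ∈ Finset.range m, b i :=
  Finset.sum_congr rfl (fun i hi => h i (Finset.mem_range.mp hi))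

lemma gext_k1 {p : Bool} {s k} (hpar : Even (∑ j ∈ Finset.range (k+1), s j) ↔ p = true) :
    gext p s k (k+1) = (Finset.range (k+1)).sup s + 1 := by
  rw [gext_gt (by omega)]
  unfold gval
  rw [if_pos hpar, if_pos rfl]

lemma gext_k1' {p : Bool} {s k} (hpar : ¬(Even (∑ j ∈ Finset.range (k+1), s j) ↔ p = true)) :
    ∀ i, k < i → gext p s k i = 0 := by
  intro i hi
  rw [gext_gt hi]
  unfold gval
  rw [if_neg hpar]

lemma gext_k2 {p : Bool} {s k} (hpar : Even (∑ j ∈ Finset.range (k+1), s j) ↔ p = true) :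
    gext p s k (k+2) =
      if Even ((Finset.range (k+1)).sup s + 1) then (Finset.range (k+1)).sup s + 2 else 0 := by
  rw [gext_gt (by omega)]
  unfold gval
  rw [if_pos hpar, if_neg (by omega)]
  by_cases hE : Even ((Finset.range (k+1)).sup s + 1)
  · rw [if_pos ⟨rfl, hE⟩, if_pos hE]
  · rw [if_neg (fun h => hE h.2), if_neg hE]

lemma gext_isRGF {n : ℕ} (p : Bool) (s : ℕ → ℕ) (k : ℕ) (hs : IsRGF n s) :
    IsRGF n (gext p s k) := by
  constructor
  · rw [gext_le (Nat.zero_le k)]; exact hs.1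
  · intro i hi
    by_cases h1 : i + 1 ≤ k
    · rw [gext_le h1,
        sup_agree (fun j hj => gext_le (by omega : j ≤ k))]
      exact hs.2 i hi
    · have hsupk : (Finset.range (k+1)).sup (gext p s k) = (Finset.range (k+1)).sup s :=
        sup_agree (fun j hj => gext_le (by omega))
      rw [gext_gt (by omega : k < i + 1)]
      unfold gval
      split_ifs with hA hB hC
      · -- i+1 = k+1
        rw [hB, hsupk]
      · -- i+1 = k+2, Even (M+1)
        have e1 : gext p s k (k+1) = (Finset.range (k+1)).sup s + 1 := gext_k1 hA
        have : gext p s k (k+1) ≤ (Finset.range (i+1)).sup (gext p s k) :=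
          Finset.le_sup (Finset.mem_range.mpr (by omega))
        omega
      · exact Nat.zero_le _
      · exact Nat.zero_le _

lemma gext_key (p : Bool) {n : ℕ} {s : ℕ → ℕ} (k : ℕ) (hs : IsRGF n s) (j : ℕ)
    (hjn : j < n) (hjk : k < j) (hagree : ∀ i < j, s i = gext p s k i) :
    ((Even (∑ i ∈ Finset.range j, s i) ↔ p = true) → s j ≤ gext p s k j) ∧
    (¬(Even (∑ i ∈ Finset.range j, s i) ↔ p = true) → gext p s k j = 0) := by
  set S := ∑ i ∈ Finset.range (k+1), s i with hS
  set M := (Finset.range (k+1)).sup s with hM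
  by_cases hpar : Even S ↔ p = true
  · -- parity matches p at position k+1
    rcases Nat.lt_or_ge j (k+2) with hj1 | hj2
    · -- j = k+1
      have hj : j = k + 1 := by omega
      subst hj
      constructor
      · intro _
        rw [gext_k1 hpar]
        exact hs.2 k hjn
      · intro h
        exact absurd hpar h
    · have e1 : s (k+1) = M + 1 := by
        rw [hagree (k+1) (by omega), gext_k1 hpar]
      rcases Nat.lt_or_ge j (k+3) with hj1 | hj3
      · -- j = k+2
        have hj : j = k + 2 := by omega
        subst hj
        have hT : ∑ i ∈ Finset.range (k+2), s i = S + (M+1) := by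
          rw [Finset.sum_range_succ, e1]
        by_cases hE : Even (M+1)
        · constructor
          · intro _
            rw [gext_k2 hpar, if_pos hE]
            have h2 : (Finset.range (k+2)).sup s ≤ M + 1 := by
              apply Finset.sup_le
              intro b hb
              rcases Nat.lt_or_ge b (k+1) with hb1 | hb1
              · have : s b ≤ M := Finset.le_sup (Finset.mem_range.mpr hb1)
                omega
              · have : b = k+1 := by simp at hb; omega
                rw [this, e1]
            have h3 : s (k+2) ≤ (Finset.range (k+2)).sup s + 1 := hs.2 (k+1) hjn
            omega
          · intro h
            exfalso
            apply h
            rw [hT, Nat.even_add]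
            tauto
        · constructor
          · intro h
            exfalso
            rw [hT, Nat.even_add] at h
            tauto
          · intro _
            rw [gext_k2 hpar, if_neg hE]
      · -- j ≥ k+3
        have hz : gext p s k j = 0 := gext_zero hj3
        refine ⟨fun h => ?_, fun _ => hz⟩
        exfalso
        have e2 : s (k+2) = if Even (M+1) then M + 2 else 0 := by
          rw [hagree (k+2) (by omega), gext_k2 hpar]
        have hsplit : ∑ i ∈ Finset.range j, s i
            = ∑ i ∈ Finset.range (k+3), s i + ∑ i ∈ Finset.Ico (k+3) j, s i := by
          rw [Finset.range_eq_Ico, Finset.range_eq_Ico]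
          exact (Finset.sum_Ico_consecutive s (by omega : 0 ≤ k+3) (by omega : k+3 ≤ j)).symm
        have hztail : ∑ i ∈ Finset.Ico (k+3) j, s i = 0 := by
          apply Finset.sum_eq_zero
          intro i hi
          simp only [Finset.mem_Ico] at hi
          rw [hagree i hi.2, gext_zero hi.1]
        have hT3 : ∑ i ∈ Finset.range (k+3), s i = S + s (k+1) + s (k+2) := by
          rw [Finset.sum_range_succ, Finset.sum_range_succ]
        rw [hsplit, hztail, Nat.add_zero, hT3, e1, e2] at h
        by_cases hE : Even (M+1)
        · rw [if_pos hE] at h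
          rw [Nat.even_add, Nat.even_add] at h
          have hE2 : ¬ Even (M+2) := by
            rcases hE with ⟨c, hc⟩
            intro ⟨d, hd⟩
            omega
          tauto
        · rw [if_neg hE] at h
          rw [Nat.add_zero, Nat.even_add] at h
          tauto
  · -- parity doesn't match: all of gext beyond k is 0
    have hz : ∀ i, k < i → gext p s k i = 0 := gext_k1' hpar
    refine ⟨fun h => ?_, fun _ => hz j hjk⟩
    exfalso
    apply hpar
    have hTS : ∑ i ∈ Finset.range j, s i = S := by
      rw [hS]
      have hsp : ∑ i ∈ Finset.range j, s i
          = ∑ i ∈ Finset.range (k+1), s i + ∑ i ∈ Finset.Ico (k+1) j, s i := by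
        rw [Finset.range_eq_Ico, Finset.range_eq_Ico]
        exact (Finset.sum_Ico_consecutive s (by omega : 0 ≤ k+1) (by omega : k+1 ≤ j)).symm
      have : ∑ i ∈ Finset.Ico (k+1) j, s i = 0 := by
        apply Finset.sum_eq_zero
        intro i hi
        simp only [Finset.mem_Ico] at hi
        rw [hagree i hi.2, hz i (by omega)]
      omega
    rwa [hTS] at h


lemma le_gmax {n : ℕ} {s : ℕ → ℕ} {k : ℕ} (hs : IsRGF n s) :
    (∀ j < n, s j = gext true s k j) ∨ rgcLt n s (gext true s k) := by
  classical
  by_cases hall : ∀ j < n, s j = gext true s k j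
  · exact Or.inl hall
  right
  push_neg at hall
  have hex : ∃ j, j < n ∧ s j ≠ gext true s k j := hall
  have hj := Nat.find_spec hex
  set j := Nat.find hex with hjdef
  have hagree : ∀ i < j, s i = gext true s k i := by
    intro i hi
    by_contra hne
    exact Nat.find_min hex hi ⟨by omega, hne⟩
  have hjk : k < j := by
    by_contra hle
    exact hj.2 (gext_le (by omega)).symm
  refine ⟨j, hj.1, hagree, ?_⟩
  have key := gext_key true k hs j hj.1 hjk hagree
  by_cases hT : Even (∑ i ∈ Finset.range j, s i)
  · exact Or.inl ⟨hT, lt_of_le_of_ne (key.1 (by simp [hT])) hj.2⟩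
  · refine Or.inr ⟨Nat.odd_iff.mpr (Nat.not_even_iff.mp hT), ?_⟩
    have hz : gext true s k j = 0 := key.2 (by simp [hT])
    rw [hz]
    have : s j ≠ 0 := fun h0 => hj.2 (by rw [h0, hz])
    omega

lemma gmin_le {n : ℕ} {t : ℕ → ℕ} {k : ℕ} (ht : IsRGF n t) :
    (∀ j < n, t j = gext false t k j) ∨ rgcLt n (gext false t k) t := by
  classical
  by_cases hall : ∀ j < n, t j = gext false t k j
  · exact Or.inl hall
  right
  push_neg at hall
  have hex : ∃ j, j < n ∧ t j ≠ gext false t k j := hall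
  have hj := Nat.find_spec hex
  set j := Nat.find hex with hjdef
  have hagree : ∀ i < j, t i = gext false t k i := by
    intro i hi
    by_contra hne
    exact Nat.find_min hex hi ⟨by omega, hne⟩
  have hjk : k < j := by
    by_contra hle
    exact hj.2 (gext_le (by omega)).symm
  have hsum : ∑ i ∈ Finset.range j, gext false t k i = ∑ i ∈ Finset.range j, t i :=
    sum_agree (fun i hi => (hagree i hi).symm)
  refine ⟨j, hj.1, fun i hi => (hagree i hi).symm, ?_⟩
  have key := gext_key false k ht j hj.1 hjk hagree
  by_cases hT : Even (∑ i ∈ Finset.range j, t i)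
  · have hz : gext false t k j = 0 := key.2 (by simp [hT])
    refine Or.inl ⟨by rw [hsum]; exact hT, ?_⟩
    rw [hz]
    have : t j ≠ 0 := fun h0 => hj.2 (by rw [h0, hz])
    omega
  · refine Or.inr ⟨?_, lt_of_le_of_ne (key.1 (by simp [hT])) hj.2⟩
    rw [hsum]
    exact Nat.odd_iff.mpr (Nat.not_even_iff.mp hT)


end Stmt9Aux

/-- consecutive elements of `R_n` in `≺` order differ in at most
3 adjacent positions. -/
theorem stmt9 (n : ℕ) (hn : 1 ≤ n)
    (s t : ℕ → ℕ) (hs : IsRGF n s) (ht : IsRGF n t)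
    (hst : rgcLt n s t)
    (hcons : ¬ ∃ u, IsRGF n u ∧ rgcLt n s u ∧ rgcLt n u t) :
    ∃ k, ∀ i < n, s i ≠ t i → k ≤ i ∧ i < k + 3 := by
  open Stmt9Aux in
  obtain ⟨k, hk, hag, hcmp⟩ := hst
  rcases le_gmax (k := k) hs with hsmax | hlt
  · rcases gmin_le (k := k) ht with htmin | hlt'
    · -- s is the max extension, t the min extension: they agree beyond k+2
      refine ⟨k, fun i hin hne => ?_⟩
      constructor
      · by_contra h
        exact hne (hag i (by omega))
      · by_contra h
        apply hne
        rw [hsmax i hin, htmin i hin, gext_zero (by omega), gext_zero (by omega)]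
    · -- u := gmin extension of t contradicts hcons
      exfalso
      apply hcons
      refine ⟨gext false t k, gext_isRGF false t k ht, ?_, hlt'⟩
      refine ⟨k, hk, fun i hi => (hag i hi).trans (gext_le (le_of_lt hi)).symm, ?_⟩
      rw [gext_le (le_refl k)]
      exact hcmp
  · -- u := gmax extension of s contradicts hcons
    exfalso
    apply hcons
    refine ⟨gext true s k, gext_isRGF true s k hs, hlt, ?_⟩
    refine ⟨k, hk, fun i hi => (gext_le (le_of_lt hi)).trans (hag i hi), ?_⟩
    rw [show ∑ i ∈ Finset.range k, gext true s k i = ∑ i ∈ Finset.range k, s i from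
      sum_agree (fun i hi => gext_le (by omega)), gext_le (le_refl k)]
    exact hcmp
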